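/- Let f = z·∏_{i=1}^{d-1}(aᵢx + bᵢy). Then the Hessian determinant h(f) of f is divisible by f, and the quotient h(f)/f is a polynomial in x and y only. -/

import Mathlib

open MvPolynomial

private lemma pd_comm {σ R : Type*} [CommSemiring R] [DecidableEq σ]
    (i j : σ) (p : MvPolynomial σ R) :
    pderiv i (pderiv j p) = pderiv j (pderiv i p) := by
  induction p using MvPolynomial.induction_on with
  | C c => simp [pderiv_C]
  | add p q hp hq => simp [hp, hq]
  | mul_X p k hp =>
    simp only [pderiv_mul, map_add, pderiv_mul, hp]
    have h1 : pderiv i (pderiv j (X k) : MvPolynomial σ R) = 0 := by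
      rcases eq_or_ne k j with rfl | h
      · simp
      · simp [pderiv_X_of_ne h]
    have h2 : pderiv j (pderiv i (X k) : MvPolynomial σ R) = 0 := by
      rcases eq_or_ne k i with rfl | h
      · simp
      · simp [pderiv_X_of_ne h]
    rw [h1, h2]
    ring

open MvPolynomial

private lemma prime_X0 : Prime (X 0 : MvPolynomial (Fin 3) ℂ) := by
  rw [← MulEquiv.prime_iff (finSuccEquiv ℂ 2).toMulEquiv]
  have : (finSuccEquiv ℂ 2).toMulEquiv (X 0) = Polynomial.X := finSuccEquiv_X_zero
  rw [this]
  exact Polynomial.prime_X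

private lemma prime_lin_b {a b : ℂ} (hb : b ≠ 0) :
    Prime (C a * X 0 + C b * X 1 : MvPolynomial (Fin 3) ℂ) := by
  let φ : MvPolynomial (Fin 3) ℂ →ₐ[ℂ] MvPolynomial (Fin 3) ℂ :=
    aeval ![X 1, C b⁻¹ * (X 0 - C a * X 1), X 2]
  let ψ : MvPolynomial (Fin 3) ℂ →ₐ[ℂ] MvPolynomial (Fin 3) ℂ :=
    aeval ![C a * X 0 + C b * X 1, X 0, X 2]
  have hC : (C b : MvPolynomial (Fin 3) ℂ) * C b⁻¹ = 1 := by
    rw [← C_mul, mul_inv_cancel₀ hb, C_1]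
  have h1 : φ.comp ψ = AlgHom.id ℂ _ := by
    apply MvPolynomial.algHom_ext
    intro i
    fin_cases i <;>
      simp [φ, ψ] <;>
      linear_combination (X 0 - C a * X 1 : MvPolynomial (Fin 3) ℂ) * hC
  have h2 : ψ.comp φ = AlgHom.id ℂ _ := by
    apply MvPolynomial.algHom_ext
    intro i
    fin_cases i <;>
      simp [φ, ψ] <;>
      linear_combination (X 1 : MvPolynomial (Fin 3) ℂ) * hC
  let e : MvPolynomial (Fin 3) ℂ ≃ₐ[ℂ] MvPolynomial (Fin 3) ℂ := AlgEquiv.ofAlgHom φ ψ h1 h2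
  rw [← MulEquiv.prime_iff e.toMulEquiv]
  have : e.toMulEquiv (C a * X 0 + C b * X 1) = X 0 := by
    show φ (C a * X 0 + C b * X 1) = X 0
    simp [φ]
    linear_combination (X 0 - C a * X 1 : MvPolynomial (Fin 3) ℂ) * hC
  rw [this]
  exact prime_X0

private lemma prime_lin {a b : ℂ} (h : a ≠ 0 ∨ b ≠ 0) :
    Prime (C a * X 0 + C b * X 1 : MvPolynomial (Fin 3) ℂ) := by
  rcases h with ha | hb
  · have h0 := prime_lin_b (a := b) (b := a) ha
    rw [← MulEquiv.prime_iff (renameEquiv ℂ (Equiv.swap (0 : Fin 3) 1)).toMulEquiv] at h0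
    have : (renameEquiv ℂ (Equiv.swap (0 : Fin 3) 1)).toMulEquiv
        (C b * X 0 + C a * X 1) = C a * X 0 + C b * X 1 := by
      show rename (Equiv.swap (0 : Fin 3) 1) (C b * X 0 + C a * X 1) = _
      simp [rename_C, rename_X, Equiv.swap_apply_left, Equiv.swap_apply_right]
      ring
    rwa [this] at h0
  · exact prime_lin_b hb

open MvPolynomial

private lemma prod_primes_dvd' {R ι : Type*} [CommRing R] [IsDomain R]
    (s : Finset ι) (ℓ : ι → R) (H : R)
    (hp : ∀ i ∈ s, Prime (ℓ i))
    (hnd : ∀ i ∈ s, ∀ j ∈ s, i ≠ j → ¬ ℓ i ∣ ℓ j)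
    (hd : ∀ i ∈ s, ℓ i ∣ H) :
    (∏ i ∈ s, ℓ i) ∣ H := by
  classical
  induction s using Finset.induction generalizing H with
  | empty => simp
  | @insert i s his ih =>
    obtain ⟨H1, rfl⟩ := hd i (Finset.mem_insert_self i s)
    rw [Finset.prod_insert his]
    refine mul_dvd_mul_left _ (ih H1 (fun j hj => hp j (Finset.mem_insert_of_mem hj))
      (fun j hj k hk hjk => hnd j (Finset.mem_insert_of_mem hj) k
        (Finset.mem_insert_of_mem hk) hjk) ?_)
    intro j hj
    have hji : j ≠ i := fun h => his (h ▸ hj)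
    have hdj := hd j (Finset.mem_insert_of_mem hj)
    rcases (hp j (Finset.mem_insert_of_mem hj)).dvd_mul.mp hdj with h | h
    · exact absurd h (hnd j (Finset.mem_insert_of_mem hj) i (Finset.mem_insert_self i s) hji)
    · exact h

open MvPolynomial

private lemma hess_div (n : ℕ) (a b : Fin n → ℂ)
    (hab : ∀ i j, i ≠ j → a i * b j ≠ a j * b i)
    (G : MvPolynomial (Fin 3) ℂ)
    (hG : G = ∏ i, (C (a i) * X 0 + C (b i) * X 1)) :
    ∃ q : MvPolynomial (Fin 3) ℂ,
      2 * pderiv 0 G * pderiv 1 G * pderiv 0 (pderiv 1 G)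
        - pderiv 0 G ^ 2 * pderiv 1 (pderiv 1 G)
        - pderiv 1 G ^ 2 * pderiv 0 (pderiv 0 G) = G * q ∧ pderiv 2 q = 0 := by
  classical
  set L : Fin n → MvPolynomial (Fin 3) ℂ := fun i => C (a i) * X 0 + C (b i) * X 1 with hL
  have hL0 : ∀ i, pderiv 0 (L i) = C (a i) := by
    intro i
    simp [hL, pderiv_X_of_ne (show (1 : Fin 3) ≠ 0 by decide)]
  have hL1 : ∀ i, pderiv 1 (L i) = C (b i) := by
    intro i
    simp [hL, pderiv_X_of_ne (show (0 : Fin 3) ≠ 1 by decide)]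
  rcases lt_or_ge n 2 with hn | hn
  · -- low degree: the expression is 0
    refine ⟨0, ?_, by simp⟩
    rw [mul_zero]
    interval_cases n
    · simp [hG]
    · rw [hG, Fin.prod_univ_one]
      simp [hL, pderiv_mul, pderiv_C_mul, pderiv_C,
        pderiv_X_of_ne (show (1 : Fin 3) ≠ 0 by decide),
        pderiv_X_of_ne (show (0 : Fin 3) ≠ 1 by decide)]
  · -- n ≥ 2
    have hab' : ∀ i, a i ≠ 0 ∨ b i ≠ 0 := by
      intro i
      by_contra h
      push_neg at h
      obtain ⟨ha, hb⟩ := h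
      have : ∃ j : Fin n, j ≠ i := by
        rcases eq_or_ne i ⟨0, by omega⟩ with rfl | h
        · exact ⟨⟨1, by omega⟩, by simp [Fin.ext_iff]⟩
        · exact ⟨⟨0, by omega⟩, fun hh => h hh.symm⟩
      obtain ⟨j, hj⟩ := this
      exact hab i j (fun h => hj h.symm) (by rw [ha, hb]; ring)
    have hprime : ∀ i, Prime (L i) := fun i => prime_lin (hab' i)
    have hnd : ∀ i j : Fin n, i ≠ j → ¬ L i ∣ L j := by
      intro i j hij ⟨u, hu⟩
      have h1 := congrArg (eval ![b i, -a i, 0]) hu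
      simp [hL, eval_mul, eval_add] at h1
      exact hab j i (fun h => hij h.symm) (by linear_combination h1)
    have hd : ∀ i : Fin n, L i ∣
        2 * pderiv 0 G * pderiv 1 G * pderiv 0 (pderiv 1 G)
          - pderiv 0 G ^ 2 * pderiv 1 (pderiv 1 G)
          - pderiv 1 G ^ 2 * pderiv 0 (pderiv 0 G) := by
      intro i
      set r : MvPolynomial (Fin 3) ℂ := ∏ j ∈ Finset.univ.erase i, L j with hr
      have hsplit : G = L i * r := by
        rw [hG, hr, ← hL]
        exact (Finset.mul_prod_erase _ _ (Finset.mem_univ i)).symm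
      have hgx : pderiv 0 G = C (a i) * r + L i * pderiv 0 r := by
        rw [hsplit, pderiv_mul, hL0]
      have hgy : pderiv 1 G = C (b i) * r + L i * pderiv 1 r := by
        rw [hsplit, pderiv_mul, hL1]
      have hgxx : pderiv 0 (pderiv 0 G) =
          C (a i) * pderiv 0 r + (C (a i) * pderiv 0 r + L i * pderiv 0 (pderiv 0 r)) := by
        rw [hgx, map_add, pderiv_C_mul, pderiv_mul, hL0]
      have hgxy : pderiv 0 (pderiv 1 G) =
          C (b i) * pderiv 0 r + (C (a i) * pderiv 1 r + L i * pderiv 0 (pderiv 1 r)) := by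
        rw [hgy, map_add, pderiv_C_mul, pderiv_mul, hL0]
      have hgyy : pderiv 1 (pderiv 1 G) =
          C (b i) * pderiv 1 r + (C (b i) * pderiv 1 r + L i * pderiv 1 (pderiv 1 r)) := by
        rw [hgy, map_add, pderiv_C_mul, pderiv_mul, hL1]
      refine ⟨- (L i)^2 * pderiv 1 r ^ 2 * pderiv 0 (pderiv 0 r)
        + 2 * (L i)^2 * pderiv 0 r * pderiv 1 r * pderiv 0 (pderiv 1 r)
        - (L i)^2 * pderiv 0 r ^ 2 * pderiv 1 (pderiv 1 r)
        - 2 * C (b i) * L i * r * pderiv 1 r * pderiv 0 (pderiv 0 r)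
        + 2 * C (b i) * L i * r * pderiv 0 r * pderiv 0 (pderiv 1 r)
        + 2 * C (b i) ^ 2 * r * pderiv 0 r ^ 2
        - C (b i) ^ 2 * r ^ 2 * pderiv 0 (pderiv 0 r)
        + 2 * C (a i) * L i * r * pderiv 1 r * pderiv 0 (pderiv 1 r)
        - 2 * C (a i) * L i * r * pderiv 0 r * pderiv 1 (pderiv 1 r)
        - 4 * C (a i) * C (b i) * r * pderiv 0 r * pderiv 1 r
        + 2 * C (a i) * C (b i) * r ^ 2 * pderiv 0 (pderiv 1 r)
        + 2 * C (a i) ^ 2 * r * pderiv 1 r ^ 2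
        - C (a i) ^ 2 * r ^ 2 * pderiv 1 (pderiv 1 r), ?_⟩
      rw [hgxx, hgxy, hgyy, hgx, hgy]
      ring
    have hdvd : G ∣
        2 * pderiv 0 G * pderiv 1 G * pderiv 0 (pderiv 1 G)
          - pderiv 0 G ^ 2 * pderiv 1 (pderiv 1 G)
          - pderiv 1 G ^ 2 * pderiv 0 (pderiv 0 G) := by
      have h := prod_primes_dvd' Finset.univ L _ (fun i _ => hprime i)
        (fun i _ j _ hij => hnd i j hij) (fun i _ => hd i)
      rwa [← hG] at h
    obtain ⟨q, hq⟩ := hdvd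
    refine ⟨q, hq, ?_⟩
    have hG2 : pderiv 2 G = 0 := by
      rw [hG]
      refine Finset.prod_induction _ (fun p => pderiv 2 p = 0) ?_ (by simp) ?_
      · intro p q hp hq
        rw [pderiv_mul, hp, hq]; ring
      · intro i _
        simp [pderiv_X_of_ne (show (0 : Fin 3) ≠ 2 by decide),
          pderiv_X_of_ne (show (1 : Fin 3) ≠ 2 by decide)]
    have h20 : pderiv 2 (pderiv 0 G) = 0 := by rw [pd_comm, hG2, map_zero]
    have h21 : pderiv 2 (pderiv 1 G) = 0 := by rw [pd_comm, hG2, map_zero]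
    have h201 : pderiv 2 (pderiv 0 (pderiv 1 G)) = 0 := by rw [pd_comm, h21, map_zero]
    have h211 : pderiv 2 (pderiv 1 (pderiv 1 G)) = 0 := by rw [pd_comm, h21, map_zero]
    have h200 : pderiv 2 (pderiv 0 (pderiv 0 G)) = 0 := by rw [pd_comm, h20, map_zero]
    have hH2 : pderiv 2 (2 * pderiv 0 G * pderiv 1 G * pderiv 0 (pderiv 1 G)
        - pderiv 0 G ^ 2 * pderiv 1 (pderiv 1 G)
        - pderiv 1 G ^ 2 * pderiv 0 (pderiv 0 G)) = 0 := by
      simp only [two_mul, map_sub, map_add, pderiv_mul, pderiv_pow,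
        h20, h21, h201, h211, h200]
      ring
    rw [hq, pderiv_mul, hG2] at hH2
    have hGne : G ≠ 0 := by
      rw [hG]
      exact Finset.prod_ne_zero_iff.mpr fun i _ => (hprime i).ne_zero
    have : G * pderiv 2 q = 0 := by linear_combination hH2
    rcases mul_eq_zero.mp this with h | h
    · exact absurd h hGne
    · exact h
theorem stmt_16 (n : ℕ) (a b : Fin n → ℂ)
    (hab : ∀ i j, i ≠ j → a i * b j ≠ a j * b i)
    (f : MvPolynomial (Fin 3) ℂ)
    (hf : f = X 2 * ∏ i, (C (a i) * X 0 + C (b i) * X 1)) :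
    ∃ q : MvPolynomial (Fin 3) ℂ,
      Matrix.det (Matrix.of fun i j : Fin 3 => pderiv i (pderiv j f)) = f * q ∧
      pderiv 2 q = 0 := by
  classical
  obtain ⟨G, hG⟩ : ∃ G : MvPolynomial (Fin 3) ℂ,
      G = ∏ i, (C (a i) * X 0 + C (b i) * X 1) := ⟨_, rfl⟩
  rw [← hG] at hf
  obtain ⟨q, hq, hq2⟩ := hess_div n a b hab G hG
  refine ⟨q, ?_, hq2⟩
  have hG2 : pderiv 2 G = 0 := by
    rw [hG]
    refine Finset.prod_induction _ (fun p => pderiv 2 p = 0) ?_ (by simp) ?_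
    · intro p q hp hq
      rw [pderiv_mul, hp, hq]; ring
    · intro i _
      simp [pderiv_X_of_ne (show (0 : Fin 3) ≠ 2 by decide),
        pderiv_X_of_ne (show (1 : Fin 3) ≠ 2 by decide)]
  have h20 : pderiv 2 (pderiv 0 G) = 0 := by rw [pd_comm, hG2, map_zero]
  have h21 : pderiv 2 (pderiv 1 G) = 0 := by rw [pd_comm, hG2, map_zero]
  have p0 : pderiv 0 f = X 2 * pderiv 0 G := by
    rw [hf, pderiv_mul, pderiv_X_of_ne (show (2 : Fin 3) ≠ 0 by decide)]
    ring
  have p1 : pderiv 1 f = X 2 * pderiv 1 G := by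
    rw [hf, pderiv_mul, pderiv_X_of_ne (show (2 : Fin 3) ≠ 1 by decide)]
    ring
  have p2 : pderiv 2 f = G := by
    rw [hf, pderiv_mul, pderiv_X_self, hG2]
    ring
  have m00 : pderiv 0 (pderiv 0 f) = X 2 * pderiv 0 (pderiv 0 G) := by
    rw [p0, pderiv_mul, pderiv_X_of_ne (show (2 : Fin 3) ≠ 0 by decide)]
    ring
  have m01 : pderiv 0 (pderiv 1 f) = X 2 * pderiv 0 (pderiv 1 G) := by
    rw [p1, pderiv_mul, pderiv_X_of_ne (show (2 : Fin 3) ≠ 0 by decide)]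
    ring
  have m10 : pderiv 1 (pderiv 0 f) = X 2 * pderiv 0 (pderiv 1 G) := by
    rw [p0, pderiv_mul, pderiv_X_of_ne (show (2 : Fin 3) ≠ 1 by decide),
      pd_comm 1 0]
    ring
  have m11 : pderiv 1 (pderiv 1 f) = X 2 * pderiv 1 (pderiv 1 G) := by
    rw [p1, pderiv_mul, pderiv_X_of_ne (show (2 : Fin 3) ≠ 1 by decide)]
    ring
  have m02 : pderiv 0 (pderiv 2 f) = pderiv 0 G := by rw [p2]
  have m12 : pderiv 1 (pderiv 2 f) = pderiv 1 G := by rw [p2]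
  have m20 : pderiv 2 (pderiv 0 f) = pderiv 0 G := by
    rw [p0, pderiv_mul, pderiv_X_self, h20]
    ring
  have m21 : pderiv 2 (pderiv 1 f) = pderiv 1 G := by
    rw [p1, pderiv_mul, pderiv_X_self, h21]
    ring
  have m22 : pderiv 2 (pderiv 2 f) = 0 := by rw [p2, hG2]
  rw [Matrix.det_fin_three]
  simp only [Matrix.of_apply]
  rw [m00, m01, m02, m10, m11, m12, m20, m21, m22, hf]
  linear_combination (X 2 : MvPolynomial (Fin 3) ℂ) * hq
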